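/- arXiv:1408.1443 — 5 statements merged into one kernel-verified Lean document; each statement's English description precedes it below -/
import Mathlib

section
/- Let X be a Banach lattice which is an abstract L1 space (i.e., ‖x+y‖ = ‖x‖ + ‖y‖ whenever |x| ∧ |y| = 0), let N be a natural number, and let δ > 0. If x_1, …, x_N are unit vectors in X with ‖|x_n| ∧ |x_m|‖ < δ for all 1 ≤ n < m ≤ N, then the vectors y_n := (|x_n| − |x_n| ∧ (⋁_{m ≠ n} |x_m|)) · sign(x_n) are pairwise disjoint (|y_n| ∧ |y_m| = 0 for n ≠ m) and each satisfies ‖y_n‖ ≥ 1 − N·δ. -/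
section Aux
variable {X : Type*} [NormedAddCommGroup X] [Lattice X] [HasSolidNorm X] [IsOrderedAddMonoid X]

lemma aux_sub_inf' (u s : X) : u - u ⊓ s = (u - s) ⊔ 0 := by
  rw [sub_inf, sub_self, sup_comm]

lemma aux_core_disj (u v t s : X) (hu : u ≤ t) (hv : v ≤ s) :
    ((u - s) ⊔ 0) ⊓ ((v - t) ⊔ 0) = 0 := by
  have h1 : ((u - s) ⊔ 0) ⊓ ((v - t) ⊔ 0) ≤ ((u - s) ⊔ 0) ⊓ ((-(u - s)) ⊔ 0) := by
    refine inf_le_inf_left _ (sup_le_sup_right ?_ 0)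
    have : v - t ≤ s - u := sub_le_sub hv hu
    simpa using this
  have h2 : ((u - s) ⊔ 0) ⊓ ((-(u - s)) ⊔ 0) = 0 := by
    have := posPart_inf_negPart_eq_zero (u - s)
    rwa [posPart_def, negPart_def] at this
  refine le_antisymm (h1.trans h2.le) (le_inf ?_ ?_) <;> exact le_sup_right

lemma aux_disj_add (a b c : X) (ha : 0 ≤ a) (hb : 0 ≤ b) (hc : 0 ≤ c)
    (hac : a ⊓ c = 0) (hbc : b ⊓ c = 0) : (a + b) ⊓ c = 0 := by
  have h1 : (a + b) ⊓ c ≤ b := by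
    have : (a + b) ⊓ c ≤ (a + b) ⊓ (c + b) := inf_le_inf_left _ (le_add_of_nonneg_right hb)
    rwa [← inf_add, hac, zero_add] at this
  refine le_antisymm ?_ (le_inf (add_nonneg ha hb) hc)
  calc (a + b) ⊓ c ≤ b ⊓ c := le_inf h1 inf_le_right
    _ = 0 := hbc

lemma aux_fold_nonneg {ι : Type*} [DecidableEq ι] (S : Finset ι) (f : ι → X)
    (hf : ∀ m, 0 ≤ f m) : 0 ≤ S.fold ((· ⊔ ·) : X → X → X) 0 f := by
  induction S using Finset.induction with
  | empty => simp
  | @insert i S' h ih => rw [Finset.fold_insert h]; exact le_sup_of_le_right ih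

lemma aux_le_fold {ι : Type*} [DecidableEq ι] (S : Finset ι) (f : ι → X)
    (m : ι) (hm : m ∈ S) : f m ≤ S.fold ((· ⊔ ·) : X → X → X) 0 f := by
  induction S using Finset.induction with
  | empty => simp at hm
  | @insert i S' h ih =>
    rw [Finset.fold_insert h]
    rcases Finset.mem_insert.1 hm with rfl | hm'
    · exact le_sup_left
    · exact le_sup_of_le_right (ih hm')

lemma aux_inf_add (a u v : X) (ha : 0 ≤ a) (hu : 0 ≤ u) (hv : 0 ≤ v) :
    a ⊓ (u + v) ≤ a ⊓ u + a ⊓ v := by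
  have h1 : a ⊓ (u + v) ≤ a ⊓ u + v := by
    rw [← sub_le_iff_le_add]
    refine le_inf ?_ ?_
    · exact (sub_le_self _ hv).trans inf_le_left
    · exact sub_le_iff_le_add.2 inf_le_right
  have h2 : a ⊓ (u + v) ≤ a ⊓ u + a := inf_le_left.trans (le_add_of_nonneg_left (le_inf ha hu))
  calc a ⊓ (u + v) ≤ (a ⊓ u + v) ⊓ (a ⊓ u + a) := le_inf h1 h2
    _ = a ⊓ u + v ⊓ a := by rw [add_inf]
    _ ≤ a ⊓ u + a ⊓ v := by rw [inf_comm v a]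

lemma aux_inf_fold_le_sum {ι : Type*} [DecidableEq ι] (S : Finset ι) (f : ι → X) (a : X)
    (ha : 0 ≤ a) (hf : ∀ m, 0 ≤ f m) :
    a ⊓ S.fold ((· ⊔ ·) : X → X → X) 0 f ≤ ∑ m ∈ S, a ⊓ f m := by
  induction S using Finset.induction with
  | empty => simp [ha]
  | @insert i S' h ih =>
    rw [Finset.fold_insert h, Finset.sum_insert h]
    have hsup : f i ⊔ S'.fold ((· ⊔ ·) : X → X → X) 0 f ≤ f i + S'.fold ((· ⊔ ·) : X → X → X) 0 f :=
      sup_le (le_add_of_nonneg_right (aux_fold_nonneg _ _ hf)) (le_add_of_nonneg_left (hf i))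
    calc a ⊓ (f i ⊔ S'.fold ((· ⊔ ·) : X → X → X) 0 f) ≤ a ⊓ (f i + S'.fold ((· ⊔ ·) : X → X → X) 0 f) :=
          inf_le_inf_left _ hsup
      _ ≤ a ⊓ f i + a ⊓ S'.fold ((· ⊔ ·) : X → X → X) 0 f :=
          aux_inf_add _ _ _ ha (hf i) (aux_fold_nonneg _ _ hf)
      _ ≤ a ⊓ f i + ∑ m ∈ S', a ⊓ f m := add_le_add_right ih _

lemma aux_sup_zero (u v : X) : (u - v) ⊔ 0 = (u ⊔ v) - v := by
  rw [sup_sub, sub_self]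

end Aux

/-- In an abstract L1 space (a Banach lattice where norms of disjoint elements add),
`ε`-disjoint unit vectors can be replaced by genuinely disjoint vectors
`y n = (|x n| - |x n| ⊓ ⋁_{m ≠ n} |x m|) · sign (x n)`, the latter expressed in lattice
terms as `((x n ⊔ 0) - (x n ⊔ 0) ⊓ s n) - (((-x n) ⊔ 0) - ((-x n) ⊔ 0) ⊓ s n)` where
`s n = ⋁_{m ≠ n} |x m|`, and each `y n` has norm at least `1 - N·δ`. -/
theorem stmt0 (X : Type*) [NormedAddCommGroup X] [Lattice X] [HasSolidNorm X] [IsOrderedAddMonoid X] [CompleteSpace X]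
    (habstractL1 : ∀ x y : X, |x| ⊓ |y| = 0 → ‖x + y‖ = ‖x‖ + ‖y‖)
    (N : ℕ) (δ : ℝ) (hδ : 0 < δ) (x : Fin N → X)
    (hunit : ∀ n, ‖x n‖ = 1)
    (hεdisj : ∀ m n : Fin N, m ≠ n → ‖|x m| ⊓ |x n|‖ < δ)
    (s y : Fin N → X)
    (hs : ∀ n, s n = (Finset.univ.erase n).fold ((· ⊔ ·) : X → X → X) 0 (fun m => |x m|))
    (hy : ∀ n, y n = ((x n ⊔ 0) - (x n ⊔ 0) ⊓ s n) - (((-x n) ⊔ 0) - ((-x n) ⊔ 0) ⊓ s n)) :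
    (∀ m n : Fin N, m ≠ n → |y m| ⊓ |y n| = 0) ∧ ∀ n, 1 - N * δ ≤ ‖y n‖ := by
  classical
  set P : Fin N → X := fun n => x n ⊔ 0 with hP
  set Q : Fin N → X := fun n => (-x n) ⊔ 0 with hQ
  set a : Fin N → X := fun n => (P n - s n) ⊔ 0 with ha
  set b : Fin N → X := fun n => (Q n - s n) ⊔ 0 with hb
  have hPpos : ∀ n, (x n)⁺ = P n := fun n => posPart_def (x n)
  have hQneg : ∀ n, (x n)⁻ = Q n := fun n => negPart_def (x n)
  have hPQ : ∀ n, P n ⊓ Q n = 0 := by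
    intro n; rw [← hPpos, ← hQneg]; exact posPart_inf_negPart_eq_zero (x n)
  have hP0 : ∀ n, 0 ≤ P n := fun n => le_sup_right
  have hQ0 : ∀ n, 0 ≤ Q n := fun n => le_sup_right
  have ha0 : ∀ n, 0 ≤ a n := fun n => le_sup_right
  have hb0 : ∀ n, 0 ≤ b n := fun n => le_sup_right
  have hs0 : ∀ n, 0 ≤ s n := by
    intro n; rw [hs n]; exact aux_fold_nonneg _ _ (fun m => abs_nonneg _)
  have haP : ∀ n, a n ≤ P n := fun n => sup_le (sub_le_self _ (hs0 n)) (hP0 n)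
  have hbQ : ∀ n, b n ≤ Q n := fun n => sup_le (sub_le_self _ (hs0 n)) (hQ0 n)
  have hab : ∀ n, a n ⊓ b n = 0 := by
    intro n
    refine le_antisymm ?_ (le_inf (ha0 n) (hb0 n))
    rw [← hPQ n]; exact inf_le_inf (haP n) (hbQ n)
  have hPabs : ∀ n, P n ≤ |x n| := fun n => sup_le (le_abs_self _) (abs_nonneg _)
  have hQabs : ∀ n, Q n ≤ |x n| := fun n => sup_le (neg_le_abs _) (abs_nonneg _)
  have hxabs : ∀ n, P n + Q n = |x n| := by
    intro n; rw [← hPpos, ← hQneg]; exact posPart_add_negPart (x n)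
  have hy' : ∀ n, y n = a n - b n := by
    intro n; rw [hy n, aux_sub_inf' (P n) (s n), aux_sub_inf' (Q n) (s n)]
  have habsy : ∀ n, |y n| = a n + b n := by
    intro n
    have hsum : a n + b n = a n ⊔ b n := by
      have := inf_add_sup (a n) (b n)
      rw [hab n, zero_add] at this
      exact this.symm
    have hpos : (y n)⁺ = a n := by
      rw [posPart_def, hy' n]
      rw [aux_sup_zero (a n) (b n), ← hsum, add_sub_cancel_right]
    have hneg : (y n)⁻ = b n := by
      rw [negPart_def, hy' n, neg_sub]
      rw [aux_sup_zero (b n) (a n), sup_comm, ← hsum, add_sub_cancel_left]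
    rw [← posPart_add_negPart (y n), hpos, hneg]
  have hles : ∀ m n : Fin N, m ≠ n → |x m| ≤ s n := by
    intro m n hmn
    rw [hs n]
    exact aux_le_fold (X := X) _ (fun m => |x m|) m (Finset.mem_erase.2 ⟨hmn, Finset.mem_univ m⟩)
  constructor
  · intro m n hmn
    have hnm : n ≠ m := hmn.symm
    have hPsm : P m ≤ s n := (hPabs m).trans (hles m n hmn)
    have hQsm : Q m ≤ s n := (hQabs m).trans (hles m n hmn)
    have hPsn : P n ≤ s m := (hPabs n).trans (hles n m hnm)
    have hQsn : Q n ≤ s m := (hQabs n).trans (hles n m hnm)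
    have haa : a m ⊓ a n = 0 := aux_core_disj (P m) (P n) (s n) (s m) hPsm hPsn
    have habn : a m ⊓ b n = 0 := aux_core_disj (P m) (Q n) (s n) (s m) hPsm hQsn
    have hba : b m ⊓ a n = 0 := aux_core_disj (Q m) (P n) (s n) (s m) hQsm hPsn
    have hbb : b m ⊓ b n = 0 := aux_core_disj (Q m) (Q n) (s n) (s m) hQsm hQsn
    have c1 : a m ⊓ (a n + b n) = 0 := by
      rw [inf_comm]
      exact aux_disj_add _ _ _ (ha0 n) (hb0 n) (ha0 m)
        (by rw [inf_comm]; exact haa) (by rw [inf_comm]; exact habn)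
    have c2 : b m ⊓ (a n + b n) = 0 := by
      rw [inf_comm]
      exact aux_disj_add _ _ _ (ha0 n) (hb0 n) (hb0 m)
        (by rw [inf_comm]; exact hba) (by rw [inf_comm]; exact hbb)
    rw [habsy m, habsy n]
    exact aux_disj_add _ _ _ (ha0 m) (hb0 m) (add_nonneg (ha0 n) (hb0 n)) c1 c2
  · intro n
    have han : a n = P n - P n ⊓ s n := (aux_sub_inf' _ _).symm
    have hbn : b n = Q n - Q n ⊓ s n := (aux_sub_inf' _ _).symm
    have hdiff : |x n| - |y n| = P n ⊓ s n + Q n ⊓ s n := by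
      rw [habsy n, han, hbn, ← hxabs n]; abel
    have hinf0 : (P n ⊓ s n) ⊓ (Q n ⊓ s n) = 0 := by
      refine le_antisymm ?_ (le_inf (le_inf (hP0 n) (hs0 n)) (le_inf (hQ0 n) (hs0 n)))
      rw [← hPQ n]
      exact inf_le_inf inf_le_left inf_le_left
    have hsum_le : P n ⊓ s n + Q n ⊓ s n ≤ |x n| ⊓ s n := by
      have h := inf_add_sup (P n ⊓ s n) (Q n ⊓ s n)
      rw [hinf0, zero_add] at h
      rw [← h]
      exact sup_le (inf_le_inf_right _ (hPabs n)) (inf_le_inf_right _ (hQabs n))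
    have hfold : |x n| ⊓ s n ≤ ∑ m ∈ Finset.univ.erase n, |x n| ⊓ |x m| := by
      rw [hs n]
      exact aux_inf_fold_le_sum _ _ _ (abs_nonneg _) (fun m => abs_nonneg _)
    have hyle : |y n| ≤ |x n| := by
      rw [habsy n, ← hxabs n]; exact add_le_add (haP n) (hbQ n)
    have hsum_nonneg : (0 : X) ≤ ∑ m ∈ Finset.univ.erase n, |x n| ⊓ |x m| :=
      Finset.sum_nonneg fun m _ => le_inf (abs_nonneg _) (abs_nonneg _)
    have hnorm1 : ‖|x n| - |y n|‖ ≤ ‖∑ m ∈ Finset.univ.erase n, |x n| ⊓ |x m|‖ := by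
      apply norm_le_norm_of_abs_le_abs
      rw [abs_of_nonneg (sub_nonneg.2 hyle), abs_of_nonneg hsum_nonneg]
      rw [hdiff]
      exact hsum_le.trans hfold
    have hnorm2 : ‖∑ m ∈ Finset.univ.erase n, |x n| ⊓ |x m|‖ ≤ ((N - 1 : ℕ) : ℝ) * δ := by
      refine (norm_sum_le _ _).trans ?_
      have hterm : ∀ m ∈ Finset.univ.erase n, ‖|x n| ⊓ |x m|‖ ≤ δ := fun m hm =>
        (hεdisj n m (Finset.ne_of_mem_erase hm).symm).le
      calc ∑ m ∈ Finset.univ.erase n, ‖|x n| ⊓ |x m|‖ ≤ ∑ _m ∈ Finset.univ.erase n, δ :=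
            Finset.sum_le_sum hterm
        _ = ((N - 1 : ℕ) : ℝ) * δ := by
            rw [Finset.sum_const, Finset.card_erase_of_mem (Finset.mem_univ n),
              Finset.card_univ, Fintype.card_fin, nsmul_eq_mul]
    have key : (1 : ℝ) ≤ ‖y n‖ + ((N - 1 : ℕ) : ℝ) * δ := by
      have h0 : ‖|x n|‖ ≤ ‖|y n|‖ + ‖|x n| - |y n|‖ := by
        calc ‖|x n|‖ = ‖|y n| + (|x n| - |y n|)‖ := by rw [add_sub_cancel]
          _ ≤ _ := norm_add_le _ _
      rw [norm_abs_eq_norm, norm_abs_eq_norm, hunit n] at h0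
      linarith [hnorm1.trans hnorm2]
    have hcast : ((N - 1 : ℕ) : ℝ) ≤ (N : ℝ) := Nat.cast_le.mpr (Nat.sub_le N 1)
    nlinarith [hδ.le, mul_le_mul_of_nonneg_right hcast hδ.le]
end

section
/- Let X be an L1(μ) space, Y a Banach space, T : X → Y a bounded operator, r > 0, N a natural number, and ε > 0. Suppose that for every N-tuple of pairwise disjoint unit vectors x_1, …, x_N in X one has max_{1 ≤ n ≤ N} ‖T x_n‖ ≥ r. Then there exists δ > 0 such that whenever x_1, …, x_N are unit vectors in X with ‖|x_n| ∧ |x_m|‖ < δ for all n ≠ m, one has max_{1 ≤ n ≤ N} ‖T x_n‖ > r − ε. -/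
open MeasureTheory

section Aux

variable {X : Type*} [NormedAddCommGroup X] [Lattice X] [IsOrderedAddMonoid X]

/-- If `Sa, Sb` dominate `a ⊓ b`, then `(a - Sa)⁺` and `(b - Sb)⁺` are disjoint. -/
lemma aux_disj (a b Sa Sb : X) (ha : a ⊓ b ≤ Sa) (hb : a ⊓ b ≤ Sb) :
    (a - Sa)⁺ ⊓ (b - Sb)⁺ = 0 := by
  refine le_antisymm ?_ (le_inf (posPart_nonneg _) (posPart_nonneg _))
  have h1 : (a - Sa)⁺ ≤ (a - a ⊓ b)⁺ := posPart_mono (sub_le_sub_left ha a)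
  have h2 : (b - Sb)⁺ ≤ (b - a ⊓ b)⁺ := posPart_mono (sub_le_sub_left hb b)
  have e1 : a - a ⊓ b = (a - b)⁺ := by
    rw [inf_eq_sub_posPart_sub a b]; abel
  have e2 : b - a ⊓ b = (b - a)⁺ := by
    rw [inf_comm, inf_eq_sub_posPart_sub b a]; abel
  calc (a - Sa)⁺ ⊓ (b - Sb)⁺ ≤ (a - a ⊓ b)⁺ ⊓ (b - a ⊓ b)⁺ := inf_le_inf h1 h2
    _ = (a - b)⁺ ⊓ (a - b)⁻ := by
        rw [e1, e2, posPart_eq_self.2 (posPart_nonneg _),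
          posPart_eq_self.2 (posPart_nonneg _), ← neg_sub a b, posPart_neg]
    _ = 0 := posPart_inf_negPart_eq_zero _

/-- The truncation `y = (x ⊔ -u) ⊓ u` satisfies `|y| ≤ u` and `|x - y| ≤ |x| - u`. -/
lemma aux_trunc (x u : X) (hu0 : 0 ≤ u) (hux : u ≤ |x|) :
    |(x ⊔ -u) ⊓ u| ≤ u ∧ |x - (x ⊔ -u) ⊓ u| ≤ |x| - u := by
  set y : X := (x ⊔ -u) ⊓ u with hy
  have hxu : (0:X) ≤ |x| - u := sub_nonneg.2 hux
  have hyu : y ≤ u := inf_le_right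
  have hyl : -u ≤ y := le_inf (le_sup_right) ((neg_nonpos.2 hu0).trans hu0)
  constructor
  · exact abs_le'.2 ⟨hyu, neg_le.1 hyl⟩
  · refine abs_le'.2 ⟨?_, ?_⟩
    · -- x - y ≤ |x| - u
      have h1 : x ⊓ u ≤ y := le_inf (inf_le_left.trans le_sup_left) inf_le_right
      have h2 : x - y ≤ x - x ⊓ u := sub_le_sub_left h1 x
      have h3 : x - x ⊓ u = (x - u)⁺ := by rw [inf_eq_sub_posPart_sub x u]; abel
      have h4 : (x - u)⁺ ≤ |x| - u :=
        sup_le (sub_le_sub_right (le_abs_self x) u) hxu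
      exact h2.trans (h3 ▸ h4)
    · -- y - x ≤ |x| - u
      rw [neg_sub, sub_le_iff_le_add]
      refine le_trans inf_le_left (sup_le (le_add_of_nonneg_left hxu) ?_)
      have h0 : (0:X) ≤ |x| + x := by
        have h := add_abs_eq_two_nsmul_posPart x
        have : (0:X) ≤ x + |x| := h ▸ nsmul_nonneg (posPart_nonneg x) 2
        rwa [add_comm] at this
      have e : |x| - u + x = (|x| + x) - u := by abel
      rw [e]
      simpa using sub_le_sub_right h0 u

end Aux

/-- Disjointness (in the lattice sense) is preserved by scalar multiplication in `L¹`. -/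
lemma aux_smul_disj {α : Type*} [MeasurableSpace α] {μ : Measure α}
    (f g : Lp ℝ 1 μ) (c d : ℝ) (h : |f| ⊓ |g| = 0) : |c • f| ⊓ |d • g| = 0 := by
  have h0 : ⇑(|f| ⊓ |g|) =ᵐ[μ] 0 := by rw [h]; exact Lp.coeFn_zero _ _ _
  have hfg : ∀ᵐ a ∂μ, |f a| ⊓ |g a| = 0 := by
    filter_upwards [h0, Lp.coeFn_inf |f| |g|, Lp.coeFn_abs f, Lp.coeFn_abs g] with a h1 h2 h3 h4
    rw [h2, Pi.inf_apply, h3, h4] at h1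
    exact h1
  refine Lp.ext ?_
  filter_upwards [hfg, Lp.coeFn_inf |c • f| |d • g|, Lp.coeFn_abs (c • f),
    Lp.coeFn_abs (d • g), Lp.coeFn_smul c f, Lp.coeFn_smul d g,
    Lp.coeFn_zero ℝ 1 μ] with a h1 h2 h3 h4 h5 h6 h7
  rw [h2, Pi.inf_apply, h3, h4, h5, h6, h7, Pi.smul_apply, Pi.smul_apply, smul_eq_mul,
    smul_eq_mul, abs_mul, abs_mul, Pi.zero_apply]
  rcases le_total |f a| |g a| with hle | hle
  · have hf0 : |f a| = 0 := by rwa [inf_eq_left.2 hle] at h1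
    rw [hf0, mul_zero]
    exact inf_eq_left.2 (by positivity)
  · have hg0 : |g a| = 0 := by rwa [inf_eq_right.2 hle] at h1
    rw [hg0, mul_zero]
    exact inf_eq_right.2 (by positivity)

/-- If `T : L1(μ) → Y` is `(r,N)`-Tauberian (every `N`-tuple of pairwise disjoint unit
vectors has some `‖T xₙ‖ ≥ r`), then for every `ε > 0` there is `δ > 0` such that every
`N`-tuple of unit vectors that is `δ`-disjoint (`‖|xₙ| ⊓ |xₘ|‖ < δ` for `n ≠ m`) has some
`‖T xₙ‖ > r - ε`. -/
theorem stmt1 {α : Type*} [MeasurableSpace α] (μ : Measure α)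
    (Y : Type*) [NormedAddCommGroup Y] [NormedSpace ℝ Y] [CompleteSpace Y]
    (T : Lp ℝ 1 μ →L[ℝ] Y) (r : ℝ) (hr : 0 < r) (N : ℕ) (ε : ℝ) (hε : 0 < ε)
    (hT : ∀ x : Fin N → Lp ℝ 1 μ, (∀ n, ‖x n‖ = 1) →
      (∀ m n, m ≠ n → |x m| ⊓ |x n| = 0) → ∃ n, r ≤ ‖T (x n)‖) :
    ∃ δ > 0, ∀ x : Fin N → Lp ℝ 1 μ, (∀ n, ‖x n‖ = 1) →
      (∀ m n, m ≠ n → ‖|x m| ⊓ |x n|‖ < δ) → ∃ n, r - ε < ‖T (x n)‖ := by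
  classical
  set M : ℝ := ‖T‖ with hM
  have hM0 : 0 ≤ M := norm_nonneg T
  set D : ℝ := (N : ℝ) * (r + M) + 1 with hD
  have hK0 : 0 ≤ (N : ℝ) * (r + M) := by positivity
  have hD0 : 0 < D := by positivity
  set δ : ℝ := min (1 / (2 * (N : ℝ) + 1)) (ε / D) with hδdef
  have hδ0 : 0 < δ := lt_min (by positivity) (by positivity)
  refine ⟨δ, hδ0, ?_⟩
  intro x hx1 hx2
  -- the overlap sums
  set S : Fin N → Lp ℝ 1 μ := fun n => ∑ m ∈ Finset.univ.erase n, (|x m| ⊓ |x n|) with hSdef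
  have hterm_nonneg : ∀ (m n : Fin N), (0 : Lp ℝ 1 μ) ≤ |x m| ⊓ |x n| :=
    fun m n => le_inf (abs_nonneg _) (abs_nonneg _)
  have hS_nonneg : ∀ n, (0 : Lp ℝ 1 μ) ≤ S n :=
    fun n => Finset.sum_nonneg fun m _ => hterm_nonneg m n
  have hS_norm : ∀ n, ‖S n‖ ≤ (N : ℝ) * δ := by
    intro n
    calc ‖S n‖ ≤ ∑ m ∈ Finset.univ.erase n, ‖|x m| ⊓ |x n|‖ := norm_sum_le _ _
      _ ≤ ∑ _m ∈ Finset.univ.erase n, δ :=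
          Finset.sum_le_sum fun m hm => (hx2 m n (Finset.ne_of_mem_erase hm)).le
      _ = ((Finset.univ.erase n).card : ℝ) * δ := by
          rw [Finset.sum_const, nsmul_eq_mul]
      _ ≤ (N : ℝ) * δ := by
          have hcard : ((Finset.univ.erase n).card : ℝ) ≤ (N : ℝ) := by
            have := Finset.card_erase_le (a := n) (s := (Finset.univ : Finset (Fin N)))
            exact_mod_cast this.trans (by simp)
          exact mul_le_mul_of_nonneg_right hcard hδ0.le
  have hSle : ∀ m n : Fin N, m ≠ n → |x m| ⊓ |x n| ≤ S m := by
    intro m n hmn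
    rw [hSdef]
    rw [inf_comm]
    exact Finset.single_le_sum (f := fun k => |x k| ⊓ |x m|)
      (fun k _ => hterm_nonneg k m) (Finset.mem_erase.2 ⟨hmn.symm, Finset.mem_univ n⟩)
  -- the disjoint truncations
  set u : Fin N → Lp ℝ 1 μ := fun n => (|x n| - S n)⁺ with hudef
  have hu0 : ∀ n, (0 : Lp ℝ 1 μ) ≤ u n := fun n => posPart_nonneg _
  have hux : ∀ n, u n ≤ |x n| := by
    intro n
    have : (|x n| - S n)⁺ ≤ (|x n|)⁺ := posPart_mono (sub_le_self _ (hS_nonneg n))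
    rwa [posPart_eq_self.2 (abs_nonneg (x n))] at this
  have hu_disj : ∀ m n : Fin N, m ≠ n → u m ⊓ u n = 0 := by
    intro m n hmn
    exact aux_disj _ _ _ _ (hSle m n hmn) (by rw [inf_comm]; exact hSle n m hmn.symm)
  set y : Fin N → Lp ℝ 1 μ := fun n => (x n ⊔ -(u n)) ⊓ u n with hydef
  have htrunc : ∀ n, |y n| ≤ u n ∧ |x n - y n| ≤ |x n| - u n :=
    fun n => aux_trunc (x n) (u n) (hu0 n) (hux n)
  have hy_disj : ∀ m n : Fin N, m ≠ n → |y m| ⊓ |y n| = 0 := by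
    intro m n hmn
    refine le_antisymm ?_ (le_inf (abs_nonneg _) (abs_nonneg _))
    calc |y m| ⊓ |y n| ≤ u m ⊓ u n := inf_le_inf (htrunc m).1 (htrunc n).1
      _ = 0 := hu_disj m n hmn
  have hxy_norm : ∀ n, ‖x n - y n‖ ≤ (N : ℝ) * δ := by
    intro n
    have h1 : |x n - y n| ≤ |S n| := by
      refine le_trans (htrunc n).2 ?_
      have e : |x n| - u n = |x n| ⊓ S n := by
        rw [hudef]
        rw [inf_eq_sub_posPart_sub (|x n|) (S n)]
      rw [e, abs_of_nonneg (hS_nonneg n)]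
      exact inf_le_right
    exact (HasSolidNorm.solid h1).trans (hS_norm n)
  have hNδ_half : (N : ℝ) * δ ≤ 1 / 2 := by
    have h1 : δ ≤ 1 / (2 * (N : ℝ) + 1) := min_le_left _ _
    have h2 : (N : ℝ) * δ ≤ (N : ℝ) * (1 / (2 * (N : ℝ) + 1)) :=
      mul_le_mul_of_nonneg_left h1 (Nat.cast_nonneg N)
    refine h2.trans ?_
    rw [mul_one_div, div_le_div_iff₀ (by positivity) (by norm_num)]
    nlinarith [Nat.cast_nonneg (α := ℝ) N]
  have hy_norm : ∀ n, 1 - (N : ℝ) * δ ≤ ‖y n‖ := by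
    intro n
    have h1 : ‖x n‖ - ‖y n‖ ≤ ‖x n - y n‖ := norm_sub_norm_le _ _
    have := hxy_norm n
    rw [hx1 n] at h1
    linarith
  have hy_pos : ∀ n, 0 < ‖y n‖ := fun n => lt_of_lt_of_le (by linarith [hNδ_half]) (hy_norm n)
  -- the normalized disjoint vectors
  set z : Fin N → Lp ℝ 1 μ := fun n => ‖y n‖⁻¹ • y n with hzdef
  have hz1 : ∀ n, ‖z n‖ = 1 := by
    intro n
    rw [hzdef]
    simp only [norm_smul, norm_inv, norm_norm]
    exact inv_mul_cancel₀ (hy_pos n).ne'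
  have hz2 : ∀ m n, m ≠ n → |z m| ⊓ |z n| = 0 :=
    fun m n hmn => aux_smul_disj _ _ _ _ (hy_disj m n hmn)
  obtain ⟨n, hn⟩ := hT z hz1 hz2
  refine ⟨n, ?_⟩
  -- transfer the bound back to `x n`
  have hTz : ‖T (z n)‖ = ‖y n‖⁻¹ * ‖T (y n)‖ := by
    rw [hzdef]
    simp only [T.map_smul, norm_smul, norm_inv, norm_norm]
  have hTy : r * ‖y n‖ ≤ ‖T (y n)‖ := by
    rw [hTz] at hn
    have h := mul_le_mul_of_nonneg_left hn (hy_pos n).le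
    rw [← mul_assoc, mul_inv_cancel₀ (hy_pos n).ne', one_mul, mul_comm] at h
    exact h
  have hTxy : ‖T (y n) - T (x n)‖ ≤ M * ((N : ℝ) * δ) := by
    rw [← map_sub]
    calc ‖T (y n - x n)‖ ≤ M * ‖y n - x n‖ := T.le_opNorm _
      _ ≤ M * ((N : ℝ) * δ) := by
          rw [norm_sub_rev]
          exact mul_le_mul_of_nonneg_left (hxy_norm n) hM0
  have hTx : r * (1 - (N : ℝ) * δ) - M * ((N : ℝ) * δ) ≤ ‖T (x n)‖ := by
    have h1 : ‖T (y n)‖ - ‖T (x n)‖ ≤ ‖T (y n) - T (x n)‖ := norm_sub_norm_le _ _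
    have h2 : r * (1 - (N : ℝ) * δ) ≤ ‖T (y n)‖ :=
      le_trans (mul_le_mul_of_nonneg_left (hy_norm n) hr.le) hTy
    linarith
  -- final numeric estimate
  have hδε : (N : ℝ) * δ * (r + M) < ε := by
    have h1 : δ ≤ ε / D := min_le_right _ _
    have h2 : (N : ℝ) * δ * (r + M) ≤ (N : ℝ) * (r + M) * (ε / D) := by
      have : (N : ℝ) * δ * (r + M) = ((N : ℝ) * (r + M)) * δ := by ring
      rw [this]
      exact mul_le_mul_of_nonneg_left h1 hK0
    refine h2.trans_lt ?_
    rw [mul_div_assoc']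
    rw [div_lt_iff₀ hD0]
    have hDgt : (N : ℝ) * (r + M) < D := by rw [hD]; linarith
    calc (N : ℝ) * (r + M) * ε < D * ε := by
          exact mul_lt_mul_of_pos_right hDgt hε
      _ = ε * D := by ring
  have e : r * (1 - (N : ℝ) * δ) - M * ((N : ℝ) * δ) = r - (N : ℝ) * δ * (r + M) := by ring
  linarith
end

section
/- Let Z be a Banach space and S : Z → Z a bounded injective operator with dense range that is not surjective. In the space Z ⊕_∞ Z (with norm ‖(x,y)‖ = max(‖x‖,‖y‖)), define X := Z ⊕ {0} and Y := {(x, Sx) : x ∈ Z} (the graph of S). Then X and Y are closed subspaces with X ∩ Y = {0}, X + Y is dense in Z ⊕_∞ Z, and X + Y ≠ Z ⊕_∞ Z; i.e., X and Y are quasi-complementary but not complementary. -/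
/-- Let `S : Z → Z` be bounded, injective, with dense range, not surjective. In
`Z ⊕_∞ Z` (the product `Z × Z` carries the max norm), `X = Z ⊕ {0}` and the graph
`Y = {(z, Sz)}` are closed subspaces with `X ∩ Y = {0}`, `X + Y` dense, but
`X + Y ≠ Z ⊕_∞ Z`: they are quasi-complementary but not complementary. -/
theorem stmt5 (Z : Type*) [NormedAddCommGroup Z] [NormedSpace ℝ Z] [CompleteSpace Z]
    (S : Z →L[ℝ] Z) (hSinj : Function.Injective S) (hSdense : DenseRange S)
    (hSnsurj : ¬Function.Surjective S)
    (X Y : Submodule ℝ (Z × Z))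
    (hX : X = Submodule.prod (⊤ : Submodule ℝ Z) (⊥ : Submodule ℝ Z))
    (hY : Y = LinearMap.graph (S : Z →ₗ[ℝ] Z)) :
    IsClosed (X : Set (Z × Z)) ∧ IsClosed (Y : Set (Z × Z)) ∧
      X ⊓ Y = ⊥ ∧ Dense ((X ⊔ Y : Submodule ℝ (Z × Z)) : Set (Z × Z)) ∧
      X ⊔ Y ≠ ⊤ := by
  subst hX hY
  refine ⟨?_, ?_, ?_, ?_, ?_⟩
  · have : (Submodule.prod (⊤ : Submodule ℝ Z) (⊥ : Submodule ℝ Z) : Set (Z × Z))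
        = Set.univ ×ˢ {0} := by
      ext ⟨a, b⟩
      simp [Submodule.mem_prod]
    rw [this]
    exact isClosed_univ.prod isClosed_singleton
  · have : (LinearMap.graph (S : Z →ₗ[ℝ] Z) : Set (Z × Z))
        = {p : Z × Z | p.2 = S p.1} := by
      ext ⟨a, b⟩
      simp [LinearMap.mem_graph_iff, eq_comm]
    rw [this]
    exact isClosed_eq continuous_snd (S.continuous.comp continuous_fst)
  · rw [eq_bot_iff]
    rintro ⟨a, b⟩ ⟨h1, h2⟩
    rw [SetLike.mem_coe, LinearMap.mem_graph_iff] at h2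
    simp only [SetLike.mem_coe, Submodule.mem_prod, Submodule.mem_top, Submodule.mem_bot,
      true_and] at h1
    simp only at h2
    have ha : a = 0 := by
      apply hSinj
      simp only [map_zero]
      exact h2.symm.trans h1
    simp [Submodule.mem_bot, Prod.ext_iff, ha, h1]
  · have hsub : Set.univ ×ˢ Set.range S ⊆
        ((Submodule.prod (⊤ : Submodule ℝ Z) (⊥ : Submodule ℝ Z) ⊔
          LinearMap.graph (S : Z →ₗ[ℝ] Z) : Submodule ℝ (Z × Z)) : Set (Z × Z)) := by
      rintro ⟨a, b⟩ ⟨-, z, hz⟩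
      rw [SetLike.mem_coe, Submodule.mem_sup]
      refine ⟨(a - z, 0), ?_, (z, S z), ?_, ?_⟩
      · simp [Submodule.mem_prod]
      · simp [LinearMap.mem_graph_iff]
      · simp [Prod.ext_iff, hz]
    have hdense : Dense (Set.univ ×ˢ Set.range S : Set (Z × Z)) := by
      rw [dense_iff_closure_eq, closure_prod_eq]
      simp [hSdense.closure_eq]
    exact hdense.mono hsub
  · intro htop
    apply hSnsurj
    intro w
    have hw : ((0 : Z), w) ∈ (Submodule.prod (⊤ : Submodule ℝ Z) (⊥ : Submodule ℝ Z) ⊔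
        LinearMap.graph (S : Z →ₗ[ℝ] Z) : Submodule ℝ (Z × Z)) := by
      rw [htop]; trivial
    rw [Submodule.mem_sup] at hw
    obtain ⟨⟨a, b⟩, ha, ⟨c, d⟩, hc, heq⟩ := hw
    rw [LinearMap.mem_graph_iff] at hc
    simp only [Submodule.mem_prod, Submodule.mem_top, Submodule.mem_bot, true_and] at ha
    obtain ⟨h1, h2⟩ := Prod.ext_iff.mp heq
    simp only at hc
    simp only [Prod.fst_add, Prod.snd_add] at h1 h2
    exact ⟨c, by simpa [ha, hc] using h2⟩
end

section
/- Let X and Y be separable infinite-dimensional Banach spaces and ε > 0, and let Y_0 be a dense linear subspace of Y of countable (algebraic) dimension. Then there exists a nuclear operator u : X → Y with nuclear norm less than ε such that u is injective and u(X) ⊇ Y_0. -/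
open NormedSpace Submodule Set

set_option maxHeartbeats 1000000

section NuclearAux

section AuxHB

variable {E : Type*} [NormedAddCommGroup E] [NormedSpace ℝ E]

/-- Hahn–Banach: a continuous functional vanishing on a closed subspace, `1` at a point
outside of it. -/
lemma aux_dual_vanish (K : Submodule ℝ E) (hK : IsClosed (K : Set E)) {z : E} (hz : z ∉ K) :
    ∃ g : E →L[ℝ] ℝ, (∀ y ∈ K, g y = 0) ∧ g z = 1 := by
  obtain ⟨f, u, hfK, hfz⟩ := geometric_hahn_banach_closed_point K.convex hK hz
  have hK0 : ∀ y ∈ K, f y = 0 := by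
    intro y hy
    by_contra h0
    have h1 : ∀ t : ℝ, t * f y < u := fun t => by
      have := hfK (t • y) (K.smul_mem t hy)
      simpa [smul_eq_mul] using this
    have := h1 ((u + 1) / f y)
    rw [div_mul_cancel₀ _ h0] at this
    linarith
  have hu : 0 < u := by have := hfK 0 K.zero_mem; simpa using this
  have hfz' : f z ≠ 0 := by intro h; rw [h] at hfz; linarith
  refine ⟨(f z)⁻¹ • f, fun y hy => ?_, ?_⟩
  · simp [hK0 y hy]
  · simp [inv_mul_cancel₀ hfz']

lemma aux_exists_nmem_span (hE : ¬FiniteDimensional ℝ E) {n : ℕ} (v : Fin n → E) :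
    ∃ z : E, z ∉ span ℝ (range v) := by
  by_contra h
  push_neg at h
  exact hE ⟨⟨(Set.finite_range v).toFinset, by
    rw [Set.Finite.coe_toFinset]
    exact eq_top_iff.2 fun x _ => h x⟩⟩

/-- There is a functional vanishing on the span of finitely many vectors and equal to `1`
at a prescribed point outside that span. -/
lemma aux_dual_vanish_fin (hE : ¬FiniteDimensional ℝ E) {n : ℕ} (v : Fin n → E) {z : E}
    (hz : z ∉ span ℝ (range v)) :
    ∃ g : E →L[ℝ] ℝ, (∀ i, g (v i) = 0) ∧ g z = 1 := by
  have : FiniteDimensional ℝ (span ℝ (range v)) :=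
    FiniteDimensional.span_of_finite ℝ (Set.finite_range v)
  obtain ⟨g, hgK, hgz⟩ := aux_dual_vanish (span ℝ (range v))
    (Submodule.closed_of_finiteDimensional _) hz
  exact ⟨g, fun i => hgK _ (subset_span (mem_range_self i)), hgz⟩

/-- Given a finite biorthogonal system, produce a vector outside the span of the given
vectors on which all given functionals vanish. -/
lemma aux_perp (hE : ¬FiniteDimensional ℝ E) {n : ℕ} (y : Fin n → E) (g : Fin n → E →L[ℝ] ℝ)
    (hb : ∀ i j, g i (y j) = if i = j then 1 else 0) :
    ∃ z' : E, z' ∉ span ℝ (range y) ∧ ∀ i, g i z' = 0 := by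
  obtain ⟨z, hz⟩ := aux_exists_nmem_span hE y
  refine ⟨z - ∑ i, g i z • y i, fun hmem => hz ?_, fun i => ?_⟩
  · have : z = (z - ∑ i, g i z • y i) + ∑ i, g i z • y i := by abel
    rw [this]
    exact Submodule.add_mem _ hmem
      (Submodule.sum_mem _ fun i _ => Submodule.smul_mem _ _ (subset_span (mem_range_self i)))
  · simp only [map_sub, map_sum, map_smul, smul_eq_mul, hb, mul_ite, mul_one, mul_zero]
    rw [Finset.sum_ite_eq Finset.univ i (fun j => g j z)]
    simp

end AuxHB

section Build

variable {P T : Type*}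

/-- Recursively build finite stages of a sequence satisfying an invariant, hitting targets. -/
private noncomputable def buildF (Inv : ∀ n, (Fin n → P) → Prop)
    (Good : T → ∀ n, (Fin n → P) → Prop) (inv0 : Inv 0 (fun i => i.elim0))
    (step : ∀ t n (p : Fin n → P), Inv n p →
      ∃ q : P, Inv (n + 1) (Fin.snoc p q) ∧ Good t (n + 1) (Fin.snoc p q))
    (tgt : ℕ → T) : ∀ n, { p : Fin n → P // Inv n p }
  | 0 => ⟨fun i => i.elim0, inv0⟩
  | (n + 1) =>
    let ih := buildF Inv Good inv0 step tgt n
    ⟨Fin.snoc ih.1 (step (tgt n) n ih.1 ih.2).choose, (step (tgt n) n ih.1 ih.2).choose_spec.1⟩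

private lemma buildF_succ (Inv : ∀ n, (Fin n → P) → Prop)
    (Good : T → ∀ n, (Fin n → P) → Prop) (inv0 : Inv 0 (fun i => i.elim0))
    (step : ∀ t n (p : Fin n → P), Inv n p →
      ∃ q : P, Inv (n + 1) (Fin.snoc p q) ∧ Good t (n + 1) (Fin.snoc p q))
    (tgt : ℕ → T) (n : ℕ) :
    (buildF Inv Good inv0 step tgt (n + 1)).1 =
      Fin.snoc (buildF Inv Good inv0 step tgt n).1
        (step (tgt n) n (buildF Inv Good inv0 step tgt n).1
          (buildF Inv Good inv0 step tgt n).2).choose := rfl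

lemma aux_build (Inv : ∀ n, (Fin n → P) → Prop)
    (Good : T → ∀ n, (Fin n → P) → Prop)
    (inv0 : Inv 0 (fun i => i.elim0))
    (mono : ∀ t n (p : Fin n → P) (q : P), Good t n p → Good t (n + 1) (Fin.snoc p q))
    (step : ∀ t n (p : Fin n → P), Inv n p →
      ∃ q : P, Inv (n + 1) (Fin.snoc p q) ∧ Good t (n + 1) (Fin.snoc p q))
    (tgt : ℕ → T) :
    ∃ s : ℕ → P, (∀ n, Inv n (fun i : Fin n => s i)) ∧
      ∀ n m, n < m → Good (tgt n) m (fun i : Fin m => s i) := by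
  classical
  set F := buildF Inv Good inv0 step tgt with hF
  refine ⟨fun n => (F (n + 1)).1 (Fin.last n), ?_, ?_⟩
  all_goals
    have agree : ∀ n (i : Fin n), (F n).1 i = (F (i.1 + 1)).1 (Fin.last i.1) := by
      intro n
      induction n with
      | zero => exact fun i => i.elim0
      | succ k ih =>
        intro i
        refine Fin.lastCases ?_ ?_ i
        · rfl
        · intro j
          have h1 : (F (k + 1)).1 j.castSucc = (F k).1 j := by
            rw [hF, buildF_succ]
            exact Fin.snoc_castSucc _ _ j
          rw [h1, ih j]
          rfl
  · intro n
    have : (fun i : Fin n => (F (i.1 + 1)).1 (Fin.last i.1)) = (F n).1 :=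
      funext fun i => (agree n i).symm
    rw [this]
    exact (F n).2
  · intro n m hnm
    obtain ⟨k, rfl⟩ : ∃ k, m = (n + 1) + k := ⟨m - (n + 1), by omega⟩
    have key : ∀ k, Good (tgt n) ((n + 1) + k) (F ((n + 1) + k)).1 := by
      intro k
      induction k with
      | zero => exact (step (tgt n) n (F n).1 (F n).2).choose_spec.2
      | succ j ihj =>
        have := mono (tgt n) ((n + 1) + j) (F ((n + 1) + j)).1
          (step (tgt ((n + 1) + j)) ((n + 1) + j) (F ((n + 1) + j)).1
            (F ((n + 1) + j)).2).choose ihj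
        exact this
    have : (fun i : Fin ((n + 1) + k) => (F (i.1 + 1)).1 (Fin.last i.1)) = (F ((n + 1) + k)).1 :=
      funext fun i => (agree _ i).symm
    rw [this]
    exact key k
end Build

section Steps

variable {E : Type*} [NormedAddCommGroup E] [NormedSpace ℝ E]



-- placeholders from part1


/-- Step for the `Y` side: extend a finite biorthogonal system to catch a target vector. -/
lemma aux_stepY_core (hE : ¬FiniteDimensional ℝ E) {n : ℕ} (y : Fin n → E)
    (g : Fin n → E →L[ℝ] ℝ) (hb : ∀ i j, g i (y j) = if i = j then 1 else 0) (t : E) :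
    ∃ (b : E) (h : E →L[ℝ] ℝ), ‖b‖ ≤ 1 ∧ (∀ i, h (y i) = 0) ∧ (∀ i, g i b = 0) ∧ h b = 1 ∧
      t ∈ span ℝ (range (Fin.snoc y b : Fin (n + 1) → E)) := by
  classical
  -- first produce `b0 ∉ span (range y)` with `g i b0 = 0` and
  -- `t ∈ span (range y ∪ {b0})`
  have hex :
      ∃ b0 : E, b0 ∉ span ℝ (range y) ∧ (∀ i, g i b0 = 0) ∧
        t ∈ span ℝ (range y) ⊔ span ℝ {b0} := by
    set t' := t - ∑ i, g i t • y i with ht'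
    have hgt' : ∀ i, g i t' = 0 := by
      intro i
      simp only [ht', map_sub, map_sum, map_smul, smul_eq_mul, hb, mul_ite, mul_one, mul_zero]
      rw [Finset.sum_ite_eq Finset.univ i (fun j => g j t)]
      simp
    have htdecomp : t = t' + ∑ i, g i t • y i := by rw [ht']; abel
    by_cases hzero : t' = 0
    · obtain ⟨z', hz'span, hz'g⟩ := aux_perp hE y g hb
      refine ⟨z', hz'span, hz'g, ?_⟩
      have : t ∈ span ℝ (range y) := by
        rw [htdecomp, hzero, zero_add]
        exact Submodule.sum_mem _ fun i _ => Submodule.smul_mem _ _ (subset_span (mem_range_self i))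
      exact Submodule.mem_sup_left this
    · refine ⟨t', ?_, hgt', ?_⟩
      · intro hmem
        apply hzero
        -- t' ∈ span (range y) but all g i vanish on t' and biorthogonality forces t' = 0
        obtain ⟨c, hc⟩ := (mem_span_range_iff_exists_fun ℝ).1 hmem
        have hcz : ∀ j, c j = 0 := by
          intro j
          have := hgt' j
          rw [← hc] at this
          simpa [map_sum, map_smul, smul_eq_mul, hb, mul_ite, mul_one, mul_zero,
            Finset.sum_ite_eq Finset.univ j (fun i => c i)] using this
        rw [← hc]
        simp [hcz]
      · rw [htdecomp]
        exact Submodule.add_mem _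
          (Submodule.mem_sup_right (subset_span rfl))
          (Submodule.mem_sup_left (Submodule.sum_mem _ fun i _ =>
            Submodule.smul_mem _ _ (subset_span (mem_range_self i))))
  obtain ⟨b0, hb0span, hb0g, hb0t⟩ := hex
  obtain ⟨h₀, hh₀y, hh₀b⟩ := aux_dual_vanish_fin hE y hb0span
  have hb0ne : b0 ≠ 0 := fun h => by simp [h] at hh₀b
  have hnb0 : ‖b0‖ ≠ 0 := norm_ne_zero_iff.2 hb0ne
  refine ⟨‖b0‖⁻¹ • b0, ‖b0‖ • h₀, ?_, ?_, ?_, ?_, ?_⟩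
  · rw [norm_smul, norm_inv, norm_norm, inv_mul_cancel₀ hnb0]
  · intro i; simp [hh₀y i]
  · intro i; simp [hb0g i]
  · simp only [ContinuousLinearMap.smul_apply, map_smul, smul_eq_mul, hh₀b]
    field_simp
  · -- t ∈ span of snoc y b
    have hsub : span ℝ (range y) ⊔ span ℝ {b0} ≤
        span ℝ (range (Fin.snoc y (‖b0‖⁻¹ • b0) : Fin (n + 1) → E)) := by
      refine sup_le (span_le.2 ?_) ((span_singleton_le_iff_mem _ _).2 ?_)
      · rintro _ ⟨i, rfl⟩
        exact subset_span ⟨i.castSucc, by simp⟩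
      · have hbmem : (‖b0‖⁻¹ • b0 : E) ∈
            span ℝ (range (Fin.snoc y (‖b0‖⁻¹ • b0) : Fin (n + 1) → E)) :=
          subset_span ⟨Fin.last n, by simp⟩
        have := Submodule.smul_mem _ ‖b0‖ hbmem
        rwa [smul_smul, mul_inv_cancel₀ hnb0, one_smul] at this
    exact hsub hb0t






/-- Step for the `X` side: extend a finite biorthogonal system, keeping the dual functionals of
norm at most one, so that the span of the functionals catches a target functional. -/
lemma aux_stepX_core (hE : ¬FiniteDimensional ℝ E) {n : ℕ} (x : Fin n → E)
    (f : Fin n → E →L[ℝ] ℝ) (hb : ∀ i j, f i (x j) = if i = j then 1 else 0)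
    (h : E →L[ℝ] ℝ) :
    ∃ (a : E) (g : E →L[ℝ] ℝ), ‖g‖ ≤ 1 ∧ (∀ i, g (x i) = 0) ∧ (∀ i, f i a = 0) ∧ g a = 1 ∧
      h ∈ span ℝ (range (Fin.snoc f g : Fin (n + 1) → E →L[ℝ] ℝ)) := by
  classical
  set h' : E →L[ℝ] ℝ := h - ∑ i, h (x i) • f i with hh'
  have hh'x : ∀ j, h' (x j) = 0 := by
    intro j
    simp only [hh', ContinuousLinearMap.sub_apply, ContinuousLinearMap.sum_apply,
      ContinuousLinearMap.smul_apply, smul_eq_mul, hb, mul_ite, mul_one, mul_zero]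
    rw [Finset.sum_ite_eq' Finset.univ j (fun i => h (x i))]
    simp
  have hdecomp : h = h' + ∑ i, h (x i) • f i := by rw [hh']; abel
  have hrange : ∀ g : E →L[ℝ] ℝ, ∀ i : Fin n,
      f i ∈ span ℝ (range (Fin.snoc f g : Fin (n + 1) → E →L[ℝ] ℝ)) := fun g i =>
    subset_span ⟨i.castSucc, by simp⟩
  by_cases hcase : ∃ w, (∀ i, f i w = 0) ∧ h' w ≠ 0
  · obtain ⟨w, hw0, hww⟩ := hcase
    have h'ne : h' ≠ 0 := fun hz => hww (by simp [hz])
    have hpos : (0 : ℝ) < ‖h'‖ := norm_pos_iff.2 h'ne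
    have hne : ‖h'‖ ≠ 0 := ne_of_gt hpos
    set g : E →L[ℝ] ℝ := ‖h'‖⁻¹ • h' with hgdef
    have hsmul : ‖h'‖ • g = h' := by
      rw [hgdef, smul_smul, mul_inv_cancel₀ hne, one_smul]
    refine ⟨(h' w)⁻¹ • ‖h'‖ • w, g, ?_, ?_, ?_, ?_, ?_⟩
    · rw [hgdef, norm_smul (α := ℝ) (β := E →L[ℝ] ℝ), norm_inv, norm_norm,
        inv_mul_cancel₀ hne]
    · intro i
      rw [hgdef]
      simp [hh'x i]
    · intro i
      simp [hw0 i]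
    · rw [hgdef]
      simp only [ContinuousLinearMap.smul_apply, map_smul, smul_eq_mul]
      field_simp
    · rw [hdecomp, ← hsmul]
      refine Submodule.add_mem _ (Submodule.smul_mem _ _ (subset_span ⟨Fin.last n, ?_⟩))
        (Submodule.sum_mem _ fun i _ => Submodule.smul_mem _ _ (hrange _ i))
      simp
  · push_neg at hcase
    -- h' vanishes on the common kernel, hence lies in the span of the f i
    have hker : (⨅ i, LinearMap.ker ((f i : E →L[ℝ] ℝ) : E →ₗ[ℝ] ℝ)) ≤
        LinearMap.ker ((h' : E →L[ℝ] ℝ) : E →ₗ[ℝ] ℝ) := by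
      intro w hw
      simp only [Submodule.mem_iInf, LinearMap.mem_ker] at hw ⊢
      exact hcase w fun i => hw i
    have hsp := mem_span_of_iInf_ker_le_ker (𝕜 := ℝ) hker
    obtain ⟨c, hc⟩ := (mem_span_range_iff_exists_fun ℝ).1 hsp
    have hch : ∑ i, c i • f i = h' := by
      ext w
      have := LinearMap.congr_fun hc w
      simpa using this
    obtain ⟨z', hz'span, hz'f⟩ := aux_perp hE x f hb
    obtain ⟨g₀, hg₀x, hg₀z⟩ := aux_dual_vanish_fin hE x hz'span
    have hg₀ne : g₀ ≠ 0 := fun hz => by simp [hz] at hg₀z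
    have hg₀pos : (0 : ℝ) < ‖g₀‖ := norm_pos_iff.2 hg₀ne
    have hg₀n : ‖g₀‖ ≠ 0 := ne_of_gt hg₀pos
    refine ⟨‖g₀‖ • z', ‖g₀‖⁻¹ • g₀, ?_, ?_, ?_, ?_, ?_⟩
    · rw [norm_smul (α := ℝ) (β := E →L[ℝ] ℝ), norm_inv, norm_norm, inv_mul_cancel₀ hg₀n]
    · intro i
      simp [hg₀x i]
    · intro i
      simp [hz'f i]
    · simp only [ContinuousLinearMap.smul_apply, map_smul, smul_eq_mul, hg₀z]
      field_simp
    · rw [hdecomp, ← hch, ← Finset.sum_add_distrib]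
      exact Submodule.sum_mem _ fun i _ => Submodule.add_mem _
        (Submodule.smul_mem _ _ (hrange _ i)) (Submodule.smul_mem _ _ (hrange _ i))


end Steps

section SnocPair

lemma aux_snoc_fst {A B : Type*} {n : ℕ} (p : Fin n → A × B) (q : A × B) :
    (fun i : Fin (n + 1) => ((Fin.snoc p q : Fin (n + 1) → A × B) i).1) =
      Fin.snoc (fun i => (p i).1) q.1 := by
  funext i
  refine Fin.lastCases ?_ ?_ i
  · simp
  · intro j; simp

lemma aux_snoc_snd {A B : Type*} {n : ℕ} (p : Fin n → A × B) (q : A × B) :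
    (fun i : Fin (n + 1) => ((Fin.snoc p q : Fin (n + 1) → A × B) i).2) =
      Fin.snoc (fun i => (p i).2) q.2 := by
  funext i
  refine Fin.lastCases ?_ ?_ i
  · simp
  · intro j; simp

end SnocPair

section Systems

variable {E : Type*} [NormedAddCommGroup E] [NormedSpace ℝ E]

/-- A total biorthogonal system with normalized functionals, catching a sequence of target
functionals inside the span of the constructed functionals. -/
lemma aux_systemX (hE : ¬FiniteDimensional ℝ E) (tgt : ℕ → E →L[ℝ] ℝ) :
    ∃ (x : ℕ → E) (f : ℕ → E →L[ℝ] ℝ),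
      (∀ i j, f i (x j) = if i = j then 1 else 0) ∧ (∀ i, ‖f i‖ ≤ 1) ∧
      (∀ e : E, (∀ i, f i e = 0) → ∀ n, tgt n e = 0) := by
  classical
  obtain ⟨s, hInv, hGood⟩ := aux_build
    (Inv := fun n (p : Fin n → E × (E →L[ℝ] ℝ)) =>
      (∀ i j, (p i).2 ((p j).1) = if i = j then 1 else 0) ∧ ∀ i, ‖(p i).2‖ ≤ 1)
    (Good := fun (t : E →L[ℝ] ℝ) n (p : Fin n → E × (E →L[ℝ] ℝ)) =>
      t ∈ span ℝ (range fun i => (p i).2))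
    (inv0 := ⟨fun i => i.elim0, fun i => i.elim0⟩)
    (mono := by
      intro t n p q ht
      refine span_mono ?_ ht
      rintro _ ⟨i, rfl⟩
      exact ⟨i.castSucc, by simp⟩)
    (step := by
      intro t n p hp
      obtain ⟨a, g, hg1, hgx, hfa, hga, hspan⟩ :=
        aux_stepX_core hE (fun i => (p i).1) (fun i => (p i).2) hp.1 t
      refine ⟨(a, g), ⟨?_, ?_⟩, ?_⟩
      · intro i j
        have h2 := congrFun (aux_snoc_snd p (a, g)) i
        have h1 := congrFun (aux_snoc_fst p (a, g)) j
        simp only at h1 h2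
        rw [h1, h2]
        refine Fin.lastCases ?_ ?_ i
        · refine Fin.lastCases ?_ ?_ j
          · simp [hga]
          · intro j'
            rw [Fin.snoc_last, Fin.snoc_castSucc, hgx j',
              if_neg (Fin.castSucc_lt_last j').ne']
        · intro i'
          refine Fin.lastCases ?_ ?_ j
          · rw [Fin.snoc_last, Fin.snoc_castSucc, hfa i',
              if_neg (Fin.castSucc_lt_last i').ne]
          · intro j'
            rw [Fin.snoc_castSucc, Fin.snoc_castSucc, hp.1 i' j']
            simp [Fin.castSucc_inj]
      · intro i
        have h2 := congrFun (aux_snoc_snd p (a, g)) i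
        simp only at h2
        rw [h2]
        refine Fin.lastCases ?_ ?_ i
        · rw [Fin.snoc_last]; exact hg1
        · intro i'
          rw [Fin.snoc_castSucc]; exact hp.2 i'
      · have h3 := hspan
        rw [← aux_snoc_snd p (a, g)] at h3
        exact h3)
    (tgt := tgt)
  refine ⟨fun n => (s n).1, fun n => (s n).2, ?_, ?_, ?_⟩
  · intro i j
    have := (hInv (max i j + 1)).1 ⟨i, by omega⟩ ⟨j, by omega⟩
    simpa [Fin.mk.injEq] using this
  · intro i
    exact (hInv (i + 1)).2 ⟨i, by omega⟩
  · intro e he n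
    have hmem := hGood n (n + 1) (by omega)
    have hle : span ℝ (range fun i : Fin (n + 1) => (s (i : ℕ)).2) ≤
        LinearMap.ker ((ContinuousLinearMap.apply ℝ ℝ e : (E →L[ℝ] ℝ) →L[ℝ] ℝ) :
          (E →L[ℝ] ℝ) →ₗ[ℝ] ℝ) := by
      refine span_le.2 ?_
      rintro _ ⟨i, rfl⟩
      simpa using he i
    have := hle hmem
    simpa using this

/-- A normalized biorthogonal system catching a sequence of target vectors in the span. -/
lemma aux_systemY (hE : ¬FiniteDimensional ℝ E) (tgt : ℕ → E) :
    ∃ (y : ℕ → E) (g : ℕ → E →L[ℝ] ℝ),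
      (∀ i j, g i (y j) = if i = j then 1 else 0) ∧ (∀ i, ‖y i‖ ≤ 1) ∧
      (∀ n, tgt n ∈ span ℝ (range y)) := by
  classical
  obtain ⟨s, hInv, hGood⟩ := aux_build
    (Inv := fun n (p : Fin n → E × (E →L[ℝ] ℝ)) =>
      (∀ i j, (p i).2 ((p j).1) = if i = j then 1 else 0) ∧ ∀ i, ‖(p i).1‖ ≤ 1)
    (Good := fun (t : E) n (p : Fin n → E × (E →L[ℝ] ℝ)) =>
      t ∈ span ℝ (range fun i => (p i).1))
    (inv0 := ⟨fun i => i.elim0, fun i => i.elim0⟩)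
    (mono := by
      intro t n p q ht
      refine span_mono ?_ ht
      rintro _ ⟨i, rfl⟩
      exact ⟨i.castSucc, by simp⟩)
    (step := by
      intro t n p hp
      obtain ⟨b, h, hb1, hhy, hgb, hhb, hspan⟩ :=
        aux_stepY_core hE (fun i => (p i).1) (fun i => (p i).2) hp.1 t
      refine ⟨(b, h), ⟨?_, ?_⟩, ?_⟩
      · intro i j
        have h2 := congrFun (aux_snoc_snd p (b, h)) i
        have h1 := congrFun (aux_snoc_fst p (b, h)) j
        simp only at h1 h2
        rw [h1, h2]
        refine Fin.lastCases ?_ ?_ i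
        · refine Fin.lastCases ?_ ?_ j
          · simp [hhb]
          · intro j'
            rw [Fin.snoc_last, Fin.snoc_castSucc, hhy j',
              if_neg (Fin.castSucc_lt_last j').ne']
        · intro i'
          refine Fin.lastCases ?_ ?_ j
          · rw [Fin.snoc_last, Fin.snoc_castSucc, hgb i',
              if_neg (Fin.castSucc_lt_last i').ne]
          · intro j'
            rw [Fin.snoc_castSucc, Fin.snoc_castSucc, hp.1 i' j']
            simp [Fin.castSucc_inj]
      · intro i
        have h1 := congrFun (aux_snoc_fst p (b, h)) i
        simp only at h1
        rw [h1]
        refine Fin.lastCases ?_ ?_ i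
        · rw [Fin.snoc_last]; exact hb1
        · intro i'
          rw [Fin.snoc_castSucc]; exact hp.2 i'
      · have h3 := hspan
        rw [← aux_snoc_fst p (b, h)] at h3
        exact h3)
    (tgt := tgt)
  refine ⟨fun n => (s n).1, fun n => (s n).2, ?_, ?_, ?_⟩
  · intro i j
    have := (hInv (max i j + 1)).1 ⟨i, by omega⟩ ⟨j, by omega⟩
    simpa [Fin.mk.injEq] using this
  · intro i
    exact (hInv (i + 1)).2 ⟨i, by omega⟩
  · intro n
    have hmem := hGood n (n + 1) (by omega)
    refine span_mono ?_ hmem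
    rintro _ ⟨i, rfl⟩
    exact ⟨(i : ℕ), rfl⟩

end Systems

end NuclearAux

/-- Given separable infinite-dimensional Banach spaces `X`, `Y`, `ε > 0`, and a dense
countable-dimensional subspace `Y₀` of `Y`, there is an injective nuclear operator
`u : X → Y` with nuclear norm `< ε` (witnessed by a nuclear representation
`u x = Σ λₙ ⟨x*ₙ, x⟩ yₙ` with `Σ |λₙ| < ε`) whose range contains `Y₀`. -/
theorem stmt7 (X Y : Type*) [NormedAddCommGroup X] [NormedSpace ℝ X] [CompleteSpace X]
    [NormedAddCommGroup Y] [NormedSpace ℝ Y] [CompleteSpace Y]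
    [TopologicalSpace.SeparableSpace X] [TopologicalSpace.SeparableSpace Y]
    (hX : ¬FiniteDimensional ℝ X) (hY : ¬FiniteDimensional ℝ Y)
    (ε : ℝ) (hε : 0 < ε) (Y₀ : Submodule ℝ Y)
    (hY₀dense : Dense (Y₀ : Set Y))
    (hY₀ctble : ∃ b : Set Y, b.Countable ∧ Submodule.span ℝ b = Y₀) :
    ∃ (u : X →L[ℝ] Y) (l : ℕ → ℝ) (f : ℕ → StrongDual ℝ X) (y : ℕ → Y),
      (∀ n, ‖f n‖ ≤ 1) ∧ (∀ n, ‖y n‖ ≤ 1) ∧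
      Summable (fun n => |l n|) ∧ (∑' n, |l n|) < ε ∧
      (∀ x : X, HasSum (fun n => (l n * f n x) • y n) (u x)) ∧
      Function.Injective u ∧ (Y₀ : Set Y) ⊆ Set.range u := by
  classical
  -- `X` is nontrivial
  obtain ⟨z0, hz0⟩ := aux_exists_nmem_span hX (fun i : Fin 0 => i.elim0)
  have hz0ne : z0 ≠ 0 := fun h => hz0 (by rw [h]; exact Submodule.zero_mem _)
  have : Nontrivial X := ⟨⟨z0, 0, hz0ne⟩⟩
  -- a dense sequence in `X` and norming functionals
  set d : ℕ → X := TopologicalSpace.denseSeq X with hd_def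
  have hd : DenseRange d := TopologicalSpace.denseRange_denseSeq X
  choose G hG1 hG2 using fun n => exists_dual_vector' ℝ (d n)
  -- total biorthogonal system in X
  obtain ⟨xs, fs, hbX, hfs1, htotG⟩ := aux_systemX hX G
  -- totality
  have htot : ∀ x : X, (∀ n, fs n x = 0) → x = 0 := by
    intro x hx
    by_contra hxne
    have hpos : 0 < ‖x‖ := norm_pos_iff.2 hxne
    obtain ⟨n, hn⟩ := hd.exists_dist_lt x (by positivity : (0 : ℝ) < ‖x‖ / 2)
    have hGx : G n x = 0 := htotG x hx n
    have h2 : ‖d n‖ ≤ ‖d n - x‖ := by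
      have e1 : G n (d n - x) = ‖d n‖ := by
        rw [map_sub, hGx, sub_zero, hG2 n]; simp
      calc ‖d n‖ = G n (d n - x) := e1.symm
        _ ≤ ‖G n (d n - x)‖ := le_abs_self _
        _ ≤ ‖G n‖ * ‖d n - x‖ := (G n).le_opNorm _
        _ = ‖d n - x‖ := by rw [hG1 n, one_mul]
    have h3 : ‖x‖ ≤ ‖x - d n‖ + ‖d n‖ := by
      simpa using norm_add_le (x - d n) (d n)
    rw [dist_eq_norm] at hn
    have h4 : ‖d n - x‖ = ‖x - d n‖ := norm_sub_rev _ _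
    linarith
  -- target vectors spanning Y₀
  obtain ⟨b, hbc, hbspan⟩ := hY₀ctble
  obtain ⟨w, hw⟩ := (hbc.insert (0 : Y)).exists_eq_range ⟨0, mem_insert 0 b⟩
  have hwspan : span ℝ (range w) = Y₀ := by
    rw [← hw, span_insert_zero, hbspan]
  -- biorthogonal system in Y spanning Y₀
  obtain ⟨ys, gs, hbY, hys1, hspanY⟩ := aux_systemY hY w
  have hY0le : Y₀ ≤ span ℝ (range ys) := by
    rw [← hwspan]
    exact span_le.2 (by rintro _ ⟨n, rfl⟩; exact hspanY n)
  -- the coefficients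
  set l : ℕ → ℝ := fun n => ε / 4 * (1 / 2) ^ n with hl_def
  have hl_pos : ∀ n, 0 < l n := fun n => by positivity
  have hl_ne : ∀ n, l n ≠ 0 := fun n => ne_of_gt (hl_pos n)
  have hl_sum : Summable l := summable_geometric_two.mul_left (ε / 4)
  have hl_tsum : ∑' n, l n = ε / 2 := by
    rw [hl_def]
    rw [tsum_mul_left, tsum_geometric_two]
    ring
  -- the operator
  set T : ℕ → X →L[ℝ] Y := fun n => l n • (fs n).smulRight (ys n) with hT_def
  have hTnorm : ∀ n, ‖T n‖ ≤ l n := by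
    intro n
    rw [hT_def]
    have h1 : ‖(fs n).smulRight (ys n)‖ ≤ 1 := by
      rw [ContinuousLinearMap.norm_smulRight_apply]
      have := hfs1 n
      have := hys1 n
      nlinarith [norm_nonneg (fs n), norm_nonneg (ys n)]
    calc ‖l n • (fs n).smulRight (ys n)‖
        = |l n| * ‖(fs n).smulRight (ys n)‖ := by
          rw [norm_smul (α := ℝ) (β := X →L[ℝ] Y)]; rw [Real.norm_eq_abs]
      _ ≤ |l n| * 1 := by
          have := abs_nonneg (l n); nlinarith
      _ = l n := by rw [mul_one, abs_of_pos (hl_pos n)]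
  have hTsummable : Summable T := Summable.of_norm_bounded hl_sum hTnorm
  set u : X →L[ℝ] Y := ∑' n, T n with hu_def
  have huT : HasSum T u := hTsummable.hasSum
  have hu : ∀ x : X, HasSum (fun n => (l n * fs n x) • ys n) (u x) := by
    intro x
    have h1 := (ContinuousLinearMap.apply ℝ Y x).hasSum huT
    have h2 : (fun n => (ContinuousLinearMap.apply ℝ Y x) (T n)) =
        fun n => (l n * fs n x) • ys n := by
      funext n
      rw [hT_def]
      simp [ContinuousLinearMap.smul_apply, ContinuousLinearMap.smulRight_apply, smul_smul]
    rw [h2] at h1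
    exact h1
  -- injectivity
  have hinj0 : ∀ x : X, u x = 0 → x = 0 := by
    intro x hx0
    refine htot x fun m => ?_
    have h1 := (gs m).hasSum (hu x)
    rw [hx0, map_zero] at h1
    have h2 : (fun n => gs m ((l n * fs n x) • ys n)) =
        fun n => if n = m then l m * fs m x else 0 := by
      funext n
      rw [map_smul, smul_eq_mul, hbY m n]
      by_cases hnm : n = m
      · subst hnm; simp
      · simp [hnm, Ne.symm hnm]
    rw [h2] at h1
    have h3 := h1.unique (hasSum_ite_eq m (l m * fs m x))
    rcases mul_eq_zero.1 h3.symm with h | h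
    · exact absurd h (hl_ne m)
    · exact h
  have hinj : Function.Injective u := by
    intro a b' hab
    have h1 : u (a - b') = 0 := by rw [map_sub, hab, sub_self]
    exact sub_eq_zero.1 (hinj0 _ h1)
  -- range contains Y₀
  have hrangeY : ∀ m, ∃ x : X, u x = ys m := by
    intro m
    refine ⟨(l m)⁻¹ • xs m, ?_⟩
    have h1 := hu ((l m)⁻¹ • xs m)
    have h2 : (fun n => (l n * fs n ((l m)⁻¹ • xs m)) • ys n) =
        fun n => if n = m then ys m else 0 := by
      funext n
      rw [map_smul, smul_eq_mul, hbX n m]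
      by_cases hnm : n = m
      · subst hnm
        rw [if_pos rfl, if_pos rfl, mul_one, mul_inv_cancel₀ (hl_ne n), one_smul]
      · rw [if_neg hnm, if_neg hnm, mul_zero, mul_zero, zero_smul]
    rw [h2] at h1
    exact h1.unique (hasSum_ite_eq m (ys m))
  have hsub : (Y₀ : Set Y) ⊆ Set.range u := by
    intro v hv
    have hle : span ℝ (range ys) ≤ LinearMap.range ((u : X →L[ℝ] Y) : X →ₗ[ℝ] Y) := by
      refine span_le.2 ?_
      rintro _ ⟨m, rfl⟩
      obtain ⟨x, hx⟩ := hrangeY m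
      exact ⟨x, hx⟩
    obtain ⟨xv, hxv⟩ := hle (hY0le hv)
    exact ⟨xv, hxv⟩
  -- conclusion
  refine ⟨u, l, fs, ys, hfs1, hys1, ?_, ?_, hu, hinj, hsub⟩
  · have habs : (fun n => |l n|) = l := funext fun n => abs_of_pos (hl_pos n)
    rw [habs]
    exact hl_sum
  · have habs : (fun n => |l n|) = l := funext fun n => abs_of_pos (hl_pos n)
    rw [habs, hl_tsum]
    linarith
end

section
/- Let X be a separable Banach space. Then X admits a Markushevich basis: there exists a biorthogonal system (x_n, x*_n)_{n∈ℕ} in X × X* (i.e., ⟨x*_m, x_n⟩ = δ_{mn}) such that the closed linear span of (x_n) is X and ∩_n ker(x*_n) = {0}. -/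
open NormedSpace Submodule Set

section helpers

variable {X : Type*} [NormedAddCommGroup X] [NormedSpace ℝ X]

/-- Hahn–Banach: annihilate a closed subspace, value 1 at a point outside. -/
private lemma mb_exists_dual (p : Submodule ℝ X) (hp : IsClosed (p : Set X)) {v : X}
    (hv : v ∉ p) : ∃ φ : StrongDual ℝ X, φ v = 1 ∧ ∀ w ∈ p, φ w = 0 := by
  obtain ⟨f, u, hfs, hux⟩ := geometric_hahn_banach_closed_point (p.convex) hp hv
  have hzero : ∀ w ∈ p, f w = 0 := by
    intro w hw
    by_contra hfw
    have h1 : f (((u + |u| + 1) / f w) • w) < u := hfs _ (p.smul_mem _ hw)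
    rw [map_smul, smul_eq_mul, div_mul_cancel₀ _ hfw] at h1
    linarith [abs_nonneg u]
  have hu0 : 0 < u := by simpa using hfs 0 p.zero_mem
  have hfv : f v ≠ 0 := by intro h; rw [h] at hux; linarith
  refine ⟨(f v)⁻¹ • f, ?_, fun w hw => ?_⟩
  · simp [inv_mul_cancel₀ hfv]
  · simp [hzero w hw]

private def MBBi {n : ℕ} (s : Fin n → X × StrongDual ℝ X) : Prop :=
  ∀ i j, (s i).2 (s j).1 = if i = j then 1 else 0

private lemma mb_range_sub {α : Type*} {n : ℕ} (t : Fin n → α) (a : α) :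
    Set.range t ⊆ Set.range (Fin.snoc t a : Fin (n + 1) → α) := by
  rintro b ⟨i, rfl⟩
  exact ⟨i.castSucc, by simp⟩

private lemma mb_decomp {n : ℕ} {s : Fin n → X × StrongDual ℝ X} (hs : MBBi s) (z : X) (i : Fin n) :
    (s i).2 (z - ∑ j, ((s j).2 z) • (s j).1) = 0 := by
  rw [map_sub, map_sum]
  have : ∀ j, (s i).2 (((s j).2 z) • (s j).1) = if i = j then (s j).2 z else 0 := by
    intro j
    rw [map_smul, hs i j]
    simp [mul_ite]
  simp only [this]
  simp

private lemma mb_exists_newvec (hX : ¬FiniteDimensional ℝ X) {n : ℕ}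
    {s : Fin n → X × StrongDual ℝ X} (hs : MBBi s) :
    ∃ v : X, (∀ i, (s i).2 v = 0) ∧ v ∉ span ℝ (Set.range fun i => (s i).1) := by
  by_contra hc
  push_neg at hc
  set W := span ℝ (Set.range fun i => (s i).1) with hWdef
  have hW : ∀ z : X, z ∈ W := by
    intro z
    have h1 : z - ∑ j, ((s j).2 z) • (s j).1 ∈ W := hc _ (mb_decomp hs z)
    have h2 : ∑ j, ((s j).2 z) • (s j).1 ∈ W :=
      Submodule.sum_mem _ fun j _ => Submodule.smul_mem _ _
        (subset_span (Set.mem_range_self j))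
    simpa using Submodule.add_mem _ h1 h2
  haveI : FiniteDimensional ℝ W := FiniteDimensional.span_of_finite ℝ (Set.finite_range _)
  exact hX (Module.Finite.of_surjective W.subtype fun z => ⟨⟨z, hW z⟩, rfl⟩)

private lemma mb_snoc_bi {n : ℕ} {s : Fin n → X × StrongDual ℝ X} (hs : MBBi s)
    {v : X} {φ : StrongDual ℝ X} (h1 : φ v = 1) (h0 : ∀ j, φ ((s j).1) = 0)
    (hv : ∀ i, (s i).2 v = 0) : MBBi (Fin.snoc s (v, φ)) := by
  intro i j
  induction i using Fin.lastCases with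
  | last =>
    induction j using Fin.lastCases with
    | last => simpa using h1
    | cast j =>
      simp only [Fin.snoc_last, Fin.snoc_castSucc]
      rw [if_neg (Fin.castSucc_lt_last j).ne']
      exact h0 j
  | cast i =>
    induction j using Fin.lastCases with
    | last =>
      simp only [Fin.snoc_last, Fin.snoc_castSucc]
      rw [if_neg (Fin.castSucc_lt_last i).ne]
      exact hv i
    | cast j =>
      simpa [Fin.castSucc_inj] using hs i j

private lemma mb_extend {n : ℕ} {s : Fin n → X × StrongDual ℝ X} (hs : MBBi s) {v : X}
    (hv0 : ∀ i, (s i).2 v = 0) (hvW : v ∉ span ℝ (Set.range fun i => (s i).1)) :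
    ∃ φ : StrongDual ℝ X, MBBi (Fin.snoc s (v, φ)) := by
  set W := span ℝ (Set.range fun i => (s i).1)
  haveI : FiniteDimensional ℝ W := FiniteDimensional.span_of_finite ℝ (Set.finite_range _)
  obtain ⟨φ, hφ1, hφ0⟩ := mb_exists_dual W W.closed_of_finiteDimensional hvW
  exact ⟨φ, mb_snoc_bi hs hφ1 (fun j => hφ0 _ (subset_span (Set.mem_range_self j))) hv0⟩

private def MBInv (y : ℕ → X) (g : ℕ → StrongDual ℝ X) (n : ℕ)
    (s : Fin n → X × StrongDual ℝ X) : Prop :=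
  MBBi s ∧ (∀ k, 2 * k + 1 ≤ n → y k ∈ span ℝ (Set.range fun i => (s i).1))
    ∧ (∀ k, 2 * k + 2 ≤ n → g k ∈ span ℝ (Set.range fun i => (s i).2))

private lemma mb_fst_snoc {n : ℕ} (s : Fin n → X × StrongDual ℝ X) (p : X × StrongDual ℝ X) :
    (fun i : Fin (n + 1) => ((Fin.snoc s p : Fin (n+1) → X × StrongDual ℝ X) i).1)
      = Fin.snoc (fun i => (s i).1) p.1 := by
  funext i
  induction i using Fin.lastCases with
  | last => simp
  | cast i => simp

private lemma mb_snd_snoc {n : ℕ} (s : Fin n → X × StrongDual ℝ X) (p : X × StrongDual ℝ X) :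
    (fun i : Fin (n + 1) => ((Fin.snoc s p : Fin (n+1) → X × StrongDual ℝ X) i).2)
      = Fin.snoc (fun i => (s i).2) p.2 := by
  funext i
  induction i using Fin.lastCases with
  | last => simp
  | cast i => simp

private lemma mb_step (hX : ¬FiniteDimensional ℝ X) (y : ℕ → X) (g : ℕ → StrongDual ℝ X)
    (n : ℕ) (s : Fin n → X × StrongDual ℝ X) (h : MBInv y g n s) :
    ∃ p, MBInv y g (n + 1) (Fin.snoc s p) := by
  obtain ⟨hbi, hy, hg⟩ := h
  have spanx_mono : ∀ p : X × StrongDual ℝ X, span ℝ (Set.range fun i => (s i).1)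
      ≤ span ℝ (Set.range fun i : Fin (n+1) =>
        ((Fin.snoc s p : Fin (n+1) → X × StrongDual ℝ X) i).1) := by
    intro p
    rw [mb_fst_snoc]
    exact span_mono (mb_range_sub _ _)
  have spanf_mono : ∀ p : X × StrongDual ℝ X, span ℝ (Set.range fun i => (s i).2)
      ≤ span ℝ (Set.range fun i : Fin (n+1) =>
        ((Fin.snoc s p : Fin (n+1) → X × StrongDual ℝ X) i).2) := by
    intro p
    rw [mb_snd_snoc]
    exact span_mono (mb_range_sub _ _)
  rcases Nat.even_or_odd n with ⟨m, hm⟩ | ⟨m, hm⟩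
  · -- vector step, n = 2 m, target y m
    set v := y m - ∑ j, ((s j).2 (y m)) • (s j).1 with hvdef
    have hv0 : ∀ i, (s i).2 v = 0 := mb_decomp hbi (y m)
    have hsum : (∑ j, ((s j).2 (y m)) • (s j).1) ∈ span ℝ (Set.range fun i => (s i).1) :=
      Submodule.sum_mem _ fun j _ => Submodule.smul_mem _ _
        (subset_span (Set.mem_range_self j))
    have hymv : y m = v + ∑ j, ((s j).2 (y m)) • (s j).1 := by rw [hvdef]; abel
    by_cases hvW : v ∈ span ℝ (Set.range fun i => (s i).1)
    · -- y m already in the span; dummy extension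
      have hym : y m ∈ span ℝ (Set.range fun i => (s i).1) := by
        rw [hymv]; exact Submodule.add_mem _ hvW hsum
      obtain ⟨w, hw0, hwW⟩ := mb_exists_newvec hX hbi
      obtain ⟨φ, hφ⟩ := mb_extend hbi hw0 hwW
      refine ⟨(w, φ), hφ, fun k hk => ?_, fun k hk => ?_⟩
      · rcases le_or_gt (2 * k + 1) n with h' | h'
        · exact spanx_mono _ (hy k h')
        · have : k = m := by omega
          subst this
          exact spanx_mono _ hym
      · exact spanf_mono _ (hg k (by omega))
    · -- genuine extension by v
      obtain ⟨φ, hφ⟩ := mb_extend hbi hv0 hvW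
      refine ⟨(v, φ), hφ, fun k hk => ?_, fun k hk => ?_⟩
      · rcases le_or_gt (2 * k + 1) n with h' | h'
        · exact spanx_mono _ (hy k h')
        · have : k = m := by omega
          subst this
          have hvmem : v ∈ span ℝ (Set.range fun i : Fin (n+1) =>
              ((Fin.snoc s (v, φ) : Fin (n+1) → X × StrongDual ℝ X) i).1) := by
            apply subset_span
            exact ⟨Fin.last n, by simp⟩
          rw [hymv]
          exact Submodule.add_mem _ hvmem (spanx_mono _ hsum)
      · exact spanf_mono _ (hg k (by omega))
  · -- functional step, n = 2 m + 1, target g m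
    set h : StrongDual ℝ X := g m - ∑ j, (g m ((s j).1)) • (s j).2 with hhdef
    have hhx : ∀ j, h ((s j).1) = 0 := by
      intro j
      rw [hhdef]
      simp only [ContinuousLinearMap.coe_sub', Pi.sub_apply, ContinuousLinearMap.coe_sum',
        Finset.sum_apply, ContinuousLinearMap.coe_smul', Pi.smul_apply, smul_eq_mul]
      have : ∀ i, g m ((s i).1) * (s i).2 ((s j).1)
          = if i = j then g m ((s j).1) else 0 := by
        intro i
        rw [hbi i j]
        by_cases hij : i = j <;> simp [hij]
      simp only [this]
      simp
    have hgm : g m = h + ∑ j, (g m ((s j).1)) • (s j).2 := by rw [hhdef]; abel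
    have hsumf : (∑ j, (g m ((s j).1)) • (s j).2) ∈ span ℝ (Set.range fun i => (s i).2) :=
      Submodule.sum_mem _ fun j _ => Submodule.smul_mem _ _
        (subset_span (Set.mem_range_self j))
    by_cases hex : ∃ v : X, (∀ i, (s i).2 v = 0) ∧ h v ≠ 0
    · obtain ⟨v, hv0, hhv⟩ := hex
      have hbi' : MBBi (Fin.snoc s (((h v)⁻¹ • v : X), h)) := by
        apply mb_snoc_bi hbi
        · rw [map_smul]
          simp [inv_mul_cancel₀ hhv]
        · exact hhx
        · intro i
          rw [map_smul, hv0 i]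
          simp
      refine ⟨(((h v)⁻¹ • v : X), h), hbi', fun k hk => ?_, fun k hk => ?_⟩
      · exact spanx_mono _ (hy k (by omega))
      · rcases le_or_gt (2 * k + 2) n with h' | h'
        · exact spanf_mono _ (hg k h')
        · have : k = m := by omega
          subst this
          have hhmem : h ∈ span ℝ (Set.range fun i : Fin (n+1) =>
              ((Fin.snoc s (((h v)⁻¹ • v : X), h) : Fin (n+1) → X × StrongDual ℝ X) i).2) := by
            apply subset_span
            exact ⟨Fin.last n, by simp⟩
          rw [hgm]
          exact Submodule.add_mem _ hhmem (spanf_mono _ hsumf)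
    · push_neg at hex
      have hh0 : h = 0 := by
        ext z
        have e1 : h (z - ∑ j, ((s j).2 z) • (s j).1) = 0 := hex _ (mb_decomp hbi z)
        have e2 : h (∑ j, ((s j).2 z) • (s j).1) = 0 := by
          rw [map_sum]
          refine Finset.sum_eq_zero fun j _ => ?_
          rw [map_smul, hhx j]
          simp
        have : h z = h (z - ∑ j, ((s j).2 z) • (s j).1)
            + h (∑ j, ((s j).2 z) • (s j).1) := by
          rw [← map_add]
          congr 1
          abel
        rw [this, e1, e2]
        simp
      have hgm' : g m ∈ span ℝ (Set.range fun i => (s i).2) := by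
        rw [hgm, hh0]
        simpa using hsumf
      obtain ⟨w, hw0, hwW⟩ := mb_exists_newvec hX hbi
      obtain ⟨φ, hφ⟩ := mb_extend hbi hw0 hwW
      refine ⟨(w, φ), hφ, fun k hk => ?_, fun k hk => ?_⟩
      · exact spanx_mono _ (hy k (by omega))
      · rcases le_or_gt (2 * k + 2) n with h' | h'
        · exact spanf_mono _ (hg k h')
        · have : k = m := by omega
          subst this
          exact spanf_mono _ hgm'

end helpers
section chain

variable {α : Type*}

private noncomputable def mbChain (P : ∀ n, (Fin n → α) → Prop)
    (h0 : P 0 (fun i => i.elim0))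
    (hstep : ∀ n s, P n s → ∃ a, P (n + 1) (Fin.snoc s a)) :
    ∀ n, { s : Fin n → α // P n s }
  | 0 => ⟨_, h0⟩
  | n + 1 =>
    let p := mbChain P h0 hstep n
    ⟨Fin.snoc p.1 (hstep n p.1 p.2).choose, (hstep n p.1 p.2).choose_spec⟩

private lemma mbChain_agree (P : ∀ n, (Fin n → α) → Prop) (h0 : P 0 (fun i => i.elim0))
    (hstep : ∀ n s, P n s → ∃ a, P (n + 1) (Fin.snoc s a)) :
    ∀ n (i : Fin n), (mbChain P h0 hstep n).1 i
      = (mbChain P h0 hstep (i.1 + 1)).1 (Fin.last i.1) := by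
  intro n
  induction n with
  | zero => exact fun i => i.elim0
  | succ n ih =>
    intro i
    induction i using Fin.lastCases with
    | last => rfl
    | cast i =>
      have h1 : (mbChain P h0 hstep (n+1)).1 i.castSucc = (mbChain P h0 hstep n).1 i := by
        simp [mbChain]
      rw [h1]
      exact ih i

private lemma mb_nat_chain (P : ∀ n, (Fin n → α) → Prop) (h0 : P 0 (fun i => i.elim0))
    (hstep : ∀ n s, P n s → ∃ a, P (n + 1) (Fin.snoc s a)) :
    ∃ F : ℕ → α, ∀ n, P n (fun i => F i.1) := by
  refine ⟨fun k => (mbChain P h0 hstep (k + 1)).1 (Fin.last k), fun n => ?_⟩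
  have : (fun i : Fin n => (mbChain P h0 hstep (i.1 + 1)).1 (Fin.last i.1))
      = (mbChain P h0 hstep n).1 := by
    funext i; exact (mbChain_agree P h0 hstep n i).symm
  rw [this]
  exact (mbChain P h0 hstep n).2

end chain

/-- Every separable infinite-dimensional Banach space admits a Markushevich basis: a
biorthogonal system `(xₙ, x*ₙ)` with `⟨x*ₘ, xₙ⟩ = δₘₙ`, dense linear span of the `xₙ`,
and total functionals (`∩ₙ ker x*ₙ = {0}`). -/
theorem stmt8 (X : Type*) [NormedAddCommGroup X] [NormedSpace ℝ X] [CompleteSpace X]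
    [TopologicalSpace.SeparableSpace X] (hX : ¬FiniteDimensional ℝ X) :
    ∃ (x : ℕ → X) (f : ℕ → StrongDual ℝ X),
      (∀ m n, f m (x n) = if m = n then 1 else 0) ∧
      Dense ((Submodule.span ℝ (Set.range x) : Submodule ℝ X) : Set X) ∧
      (∀ z : X, (∀ n, f n z = 0) → z = 0) := by
  haveI : Nonempty X := ⟨0⟩
  obtain ⟨y, hy⟩ := TopologicalSpace.exists_dense_seq X
  choose g hg1 hg2 using fun k => exists_dual_vector'' ℝ (y k)
  -- totality of the `g` family
  have gtotal : ∀ z : X, (∀ k, g k z = 0) → z = 0 := by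
    intro z hz
    by_contra hz0
    have hzn : (0 : ℝ) < ‖z‖ := norm_pos_iff.mpr hz0
    have hpos : (0 : ℝ) < ‖z‖ / 2 := by linarith
    obtain ⟨k, hk⟩ := hy.exists_dist_lt z hpos
    rw [dist_eq_norm] at hk
    have hk' : ‖y k - z‖ < ‖z‖ / 2 := by rw [norm_sub_rev]; exact hk
    have e1 : g k (y k) = ‖y k‖ := hg2 k
    have e2 : g k (y k) = g k (y k - z) := by rw [map_sub, hz k]; ring
    have e3 : ‖g k (y k - z)‖ ≤ ‖y k - z‖ := by
      calc ‖g k (y k - z)‖ ≤ ‖g k‖ * ‖y k - z‖ := (g k).le_opNorm _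
        _ ≤ 1 * ‖y k - z‖ := by
            gcongr
            exact hg1 k
        _ = ‖y k - z‖ := one_mul _
    have e4 : ‖y k‖ ≤ ‖y k - z‖ := by
      calc ‖y k‖ = ‖g k (y k - z)‖ := by rw [← e2, e1]; simp [Real.norm_eq_abs, abs_of_nonneg]
        _ ≤ ‖y k - z‖ := e3
    have e5 : ‖z‖ ≤ ‖y k‖ + ‖y k - z‖ := by
      calc ‖z‖ = ‖y k - (y k - z)‖ := by congr 1; abel
        _ ≤ ‖y k‖ + ‖y k - z‖ := norm_sub_le _ _
    linarith [hk']
  obtain ⟨F, hF⟩ := mb_nat_chain (MBInv y g)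
    (⟨fun i => i.elim0, fun k hk => by omega, fun k hk => by omega⟩)
    (fun n s hs => mb_step hX y g n s hs)
  refine ⟨fun k => (F k).1, fun k => (F k).2, ?_, ?_, ?_⟩
  · intro m n
    have := (hF (max m n + 1)).1 ⟨m, by omega⟩ ⟨n, by omega⟩
    simpa [Fin.mk.injEq] using this
  · apply hy.mono
    rintro _ ⟨k, rfl⟩
    have h1 := (hF (2 * k + 1)).2.1 k le_rfl
    have h2 : Submodule.span ℝ (Set.range fun i : Fin (2 * k + 1) => (F i.1).1)
        ≤ Submodule.span ℝ (Set.range fun k => (F k).1) := by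
      apply Submodule.span_mono
      rintro _ ⟨i, rfl⟩
      exact ⟨i.1, rfl⟩
    exact h2 h1
  · intro z hz
    apply gtotal z
    intro k
    have h1 := (hF (2 * k + 2)).2.2 k le_rfl
    refine Submodule.span_induction ?_ ?_ ?_ ?_ h1
    · rintro _ ⟨i, rfl⟩
      exact hz i.1
    · simp
    · intro a b _ _ ha hb
      simp [ha, hb]
    · intro c a _ ha
      simp [ha]
end
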